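/- Möbius-type inversion over shuffles with ones: suppose families f(k,t) and g(k,t) (valued in an abelian group, defined for all indices k of depth ≥ 2 and t ≥ 0, extended linearly in k) satisfy f(k,t) = −∑_{u=0}^{t} g(k_u, t−u) for all k and t, where k_u := (k₁, ((k₂,…,k_{r-1}) ш {1}^u), k_r) and (k_u)_{u'} = C(u+u',u)·k_{u+u'}. Then g(k,t) = −∑_{u=0}^{t} (−1)^u f(k_u, t−u) for all k and t. -/

import Mathlib

/-- The naive shuffle of two tuples: formal sum of all interleavings. -/
noncomputable def shuf : List ℕ → List ℕ → (List ℕ →₀ ℤ)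
  | [], l => Finsupp.single l 1
  | k, [] => Finsupp.single k 1
  | a :: k, b :: l =>
      (shuf k (b :: l)).mapDomain (a :: ·) + (shuf (a :: k) l).mapDomain (b :: ·)
termination_by k l => k.length + l.length


lemma shuf_nil_left (l : List ℕ) : shuf [] l = Finsupp.single l 1 := by
  rw [shuf]

lemma shuf_nil_right (k : List ℕ) : shuf k [] = Finsupp.single k 1 := by
  cases k <;> rw [shuf] <;> simp

lemma shuf_cons (a b : ℕ) (k l : List ℕ) :
    shuf (a :: k) (b :: l)
      = (shuf k (b :: l)).mapDomain (a :: ·) + (shuf (a :: k) l).mapDomain (b :: ·) := by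
  rw [shuf]

open Finsupp in
/-- Unfold one step of the right-shuffle operator applied to a cons-mapped sum. -/
lemma T_cons (x z : ℕ) (c' : List ℕ) (w : List ℕ →₀ ℤ) :
    ((w.mapDomain (x :: ·)).sum fun l k => k • shuf l (z :: c'))
      = (w.sum fun l k => k • shuf l (z :: c')).mapDomain (x :: ·)
        + ((w.mapDomain (x :: ·)).sum fun l k => k • shuf l c').mapDomain (z :: ·) := by
  rw [Finsupp.sum_mapDomain_index (by simp) (by intros; rw [add_smul]),
      Finsupp.sum_mapDomain_index (by simp) (by intros; rw [add_smul])]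
  rw [Finsupp.mapDomain_sum, Finsupp.mapDomain_sum, ← Finsupp.sum_add]
  refine Finsupp.sum_congr fun l _ => ?_
  rw [shuf_cons, smul_add, Finsupp.mapDomain_smul, Finsupp.mapDomain_smul]

open Finsupp in
/-- Unfold one step of the left-shuffle operator applied to a cons-mapped sum. -/
lemma T'_cons (x y : ℕ) (a' : List ℕ) (w : List ℕ →₀ ℤ) :
    ((w.mapDomain (y :: ·)).sum fun l k => k • shuf (x :: a') l)
      = ((w.mapDomain (y :: ·)).sum fun l k => k • shuf a' l).mapDomain (x :: ·)
        + (w.sum fun l k => k • shuf (x :: a') l).mapDomain (y :: ·) := by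
  rw [Finsupp.sum_mapDomain_index (by simp) (by intros; rw [add_smul]),
      Finsupp.sum_mapDomain_index (by simp) (by intros; rw [add_smul])]
  rw [Finsupp.mapDomain_sum, Finsupp.mapDomain_sum, ← Finsupp.sum_add]
  refine Finsupp.sum_congr fun l _ => ?_
  rw [shuf_cons, smul_add, Finsupp.mapDomain_smul, Finsupp.mapDomain_smul]

/-- Associativity of the shuffle product (as formal sums). -/
lemma shuf_assoc : ∀ (a b c : List ℕ),
    ((shuf a b).sum fun l k => k • shuf l c) = (shuf b c).sum fun l k => k • shuf a l
  | [], b, c => by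
    rw [shuf_nil_left, Finsupp.sum_single_index (by simp), one_smul]
    have : ((shuf b c).sum fun l k => k • shuf [] l)
        = (shuf b c).sum fun l k => Finsupp.single l k := by
      refine Finsupp.sum_congr fun l _ => ?_
      rw [shuf_nil_left, Finsupp.smul_single', mul_one]
    rw [this, Finsupp.sum_single]
  | x :: a', b, [] => by
    rw [shuf_nil_right b, Finsupp.sum_single_index (by simp), one_smul]
    have : ((shuf (x :: a') b).sum fun l k => k • shuf l [])
        = (shuf (x :: a') b).sum fun l k => Finsupp.single l k := by
      refine Finsupp.sum_congr fun l _ => ?_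
      rw [shuf_nil_right, Finsupp.smul_single', mul_one]
    rw [this, Finsupp.sum_single]
  | x :: a', [], z :: c' => by
    rw [shuf_nil_right (x :: a'), shuf_nil_left (z :: c'),
      Finsupp.sum_single_index (by simp), Finsupp.sum_single_index (by simp),
      one_smul]
  | x :: a', y :: b', z :: c' => by
    have hx := shuf_assoc a' (y :: b') (z :: c')
    have hy := shuf_assoc (x :: a') b' (z :: c')
    have hz := shuf_assoc (x :: a') (y :: b') c'
    rw [shuf_cons x y a' b', shuf_cons y z b' c']
    rw [Finsupp.sum_add_index' (by simp) (fun l k1 k2 => add_smul k1 k2 _),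
        Finsupp.sum_add_index' (by simp) (fun l k1 k2 => add_smul k1 k2 _)]
    rw [T_cons, T_cons, T'_cons, T'_cons]
    rw [shuf_cons x y a' b',
        Finsupp.sum_add_index' (by simp) (fun l k1 k2 => add_smul k1 k2 _)] at hz
    rw [shuf_cons y z b' c',
        Finsupp.sum_add_index' (by simp) (fun l k1 k2 => add_smul k1 k2 _)] at hx
    rw [hx, hy, ← hz]
    rw [Finsupp.mapDomain_add, Finsupp.mapDomain_add]
    abel
termination_by a b c => a.length + b.length + c.length

lemma shuf_ones : ∀ (u u' : ℕ),
    shuf (List.replicate u 1) (List.replicate u' 1)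
      = ((u + u').choose u : ℤ) • Finsupp.single (List.replicate (u + u') 1) 1
  | 0, u' => by simp [shuf_nil_left]
  | u + 1, 0 => by simp [shuf_nil_right]
  | u + 1, u' + 1 => by
    have h1 := shuf_ones u (u' + 1)
    have h2 := shuf_ones (u + 1) u'
    rw [List.replicate_succ (n := u), List.replicate_succ (n := u'), shuf_cons,
        ← List.replicate_succ (n := u), ← List.replicate_succ (n := u'), h1, h2]
    rw [Finsupp.mapDomain_smul, Finsupp.mapDomain_smul, Finsupp.mapDomain_single,
        Finsupp.mapDomain_single]
    rw [Finsupp.smul_single', Finsupp.smul_single', Finsupp.smul_single', mul_one, mul_one,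
        mul_one]
    have e1 : u + (u' + 1) = u + u' + 1 := by omega
    have e2 : u + 1 + u' = u + u' + 1 := by omega
    have e3 : u + 1 + (u' + 1) = u + u' + 1 + 1 := by omega
    rw [e1, e2, e3, ← Finsupp.single_add, ← List.replicate_succ (n := u + u' + 1)]
    congr 1

termination_by u u' => u + u'

lemma sum_shuf_ones (m : List ℕ) (u u' : ℕ) :
    ((shuf m (List.replicate u 1)).sum fun l k => k • shuf l (List.replicate u' 1))
      = ((u + u').choose u : ℤ) • shuf m (List.replicate (u + u') 1) := by
  rw [shuf_assoc, shuf_ones, Finsupp.smul_single', mul_one,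
      Finsupp.sum_single_index (by simp)]

/-- k_u := (k₁, ((k₂,…,k_{r-1}) ш {1}^u), k_r), as a formal sum of indices. -/
noncomputable def kU (k : List ℕ) (u : ℕ) : List ℕ →₀ ℤ :=
  (shuf (k.drop 1).dropLast (List.replicate u 1)).mapDomain
    (fun mid => k.headD 1 :: (mid ++ [k.getLastD 1]))

/-- Linear extension of `kU` to formal ℤ-linear combinations of indices. -/
noncomputable def kUExt (x : List ℕ →₀ ℤ) (u : ℕ) : List ℕ →₀ ℤ :=
  x.sum fun k c => c • kU k u


lemma concat_getLastD : ∀ (l : List ℕ) (a d : ℕ),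
    (a :: l).dropLast ++ [(a :: l).getLastD d] = a :: l
  | [], a, d => by simp
  | b :: l, a, d => by
    rw [List.dropLast_cons₂, List.getLastD_cons, List.cons_append, concat_getLastD l b a]

lemma list_decomp {k : List ℕ} (hk : 2 ≤ k.length) :
    k = k.headD 1 :: ((k.drop 1).dropLast ++ [k.getLastD 1]) := by
  match k, hk with
  | a :: b :: rest, _ =>
    show a :: b :: rest = a :: ((b :: rest).dropLast ++ [(a :: b :: rest).getLastD 1])
    rw [List.getLastD_cons, concat_getLastD rest b a]

lemma kU_zero {k : List ℕ} (hk : 2 ≤ k.length) : kU k 0 = Finsupp.single k 1 := by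
  rw [kU, List.replicate_zero, shuf_nil_right, Finsupp.mapDomain_single]
  exact congrArg (Finsupp.single · 1) (list_decomp hk).symm

lemma kU_fmid (h g : ℕ) (mid : List ℕ) (u' : ℕ) :
    kU (h :: (mid ++ [g])) u'
      = (shuf mid (List.replicate u' 1)).mapDomain (fun m => h :: (m ++ [g])) := by
  have h1 : ((h :: (mid ++ [g])).drop 1).dropLast = mid := by simp
  have h3 : (h :: (mid ++ [g])).getLastD 1 = g := by
    rw [show h :: (mid ++ [g]) = (h :: mid) ++ [g] from List.cons_append.symm,
      List.getLastD_concat]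
  rw [kU, h1, h3]
  rfl

lemma kU_support_length {k : List ℕ} (u : ℕ) :
    ∀ j ∈ (kU k u).support, 2 ≤ j.length := by
  classical
  intro j hj
  have h := Finsupp.mapDomain_support hj
  simp only [Finset.mem_image] at h
  obtain ⟨mid, -, rfl⟩ := h
  simp

lemma kUExt_kU (k : List ℕ) (u u' : ℕ) :
    kUExt (kU k u) u' = ((u + u').choose u : ℤ) • kU k (u + u') := by
  rw [kUExt, kU, Finsupp.sum_mapDomain_index (by simp) (by intros; rw [add_smul])]
  have h1 : ((shuf (k.drop 1).dropLast (List.replicate u 1)).sum fun mid c =>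
        c • kU (k.headD 1 :: (mid ++ [k.getLastD 1])) u')
      = (shuf (k.drop 1).dropLast (List.replicate u 1)).sum fun mid c =>
        (c • shuf mid (List.replicate u' 1)).mapDomain
          (fun m => k.headD 1 :: (m ++ [k.getLastD 1])) := by
    refine Finsupp.sum_congr fun mid _ => ?_
    rw [kU_fmid, Finsupp.mapDomain_smul]
  rw [h1, ← Finsupp.mapDomain_sum]
  have h2 : ((shuf (k.drop 1).dropLast (List.replicate u 1)).sum fun mid c =>
        c • shuf mid (List.replicate u' 1))
      = ((u + u').choose u : ℤ) • shuf (k.drop 1).dropLast (List.replicate (u + u') 1) :=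
    sum_shuf_ones _ u u'
  rw [h2, Finsupp.mapDomain_smul, kU]

lemma lin_sum {M : Type*} [AddCommGroup M] (H : (List ℕ →₀ ℤ) → ℕ → M)
    (h0 : ∀ t, H 0 t = 0) (hadd : ∀ x y t, H (x + y) t = H x t + H y t)
    (x : List ℕ →₀ ℤ) (y : List ℕ → ℤ → (List ℕ →₀ ℤ)) (t : ℕ) :
    H (x.sum y) t = x.sum fun j c => H (y j c) t :=
  map_finsuppSum
    ({ toFun := fun z => H z t, map_zero' := h0 t,
       map_add' := fun a b => hadd a b t } : (List ℕ →₀ ℤ) →+ M) x y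


set_option maxHeartbeats 1000000 in
/-- Möbius-type inversion over shuffles with ones: if
F(k,t) = −∑_{u=0}^{t} G(k_u, t−u) for all indices k of depth ≥ 2 and all t,
then G(k,t) = −∑_{u=0}^{t} (−1)^u F(k_u, t−u). -/
theorem shuffle_ones_inversion {M : Type*} [AddCommGroup M]
    (F G : (List ℕ →₀ ℤ) → ℕ → M)
    (hFadd : ∀ x y t, F (x + y) t = F x t + F y t)
    (hFsmul : ∀ (c : ℤ) x t, F (c • x) t = c • F x t)
    (hGadd : ∀ x y t, G (x + y) t = G x t + G y t)
    (hGsmul : ∀ (c : ℤ) x t, G (c • x) t = c • G x t)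
    (hrec : ∀ k : List ℕ, 2 ≤ k.length → ∀ t : ℕ,
      F (Finsupp.single k 1) t
        = -∑ u ∈ Finset.range (t + 1), G (kUExt (Finsupp.single k 1) u) (t - u)) :
    ∀ k : List ℕ, 2 ≤ k.length → ∀ t : ℕ,
      G (Finsupp.single k 1) t
        = -∑ u ∈ Finset.range (t + 1),
            (-1 : ℤ) ^ u • F (kUExt (Finsupp.single k 1) u) (t - u) := by
  classical
  have hF0 : ∀ t, F 0 t = 0 := fun t => by simpa using hFsmul 0 0 t
  have hG0 : ∀ t, G 0 t = 0 := fun t => by simpa using hGsmul 0 0 t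
  have hFsum := lin_sum F hF0 hFadd
  have hGsum := lin_sum G hG0 hGadd
  have hsingle : ∀ (j : List ℕ) (u : ℕ), kUExt (Finsupp.single j 1) u = kU j u := by
    intro j u; rw [kUExt, Finsupp.sum_single_index (by simp), one_smul]
  -- Generalized recursion, for arbitrary formal sums supported on indices of depth ≥ 2.
  have hrecE : ∀ (x : List ℕ →₀ ℤ), (∀ j ∈ x.support, 2 ≤ j.length) → ∀ s : ℕ,
      F x s = -∑ u ∈ Finset.range (s + 1), G (kUExt x u) (s - u) := by
    intro x hx s
    have h1 : F x s = x.sum fun j c => c • F (Finsupp.single j 1) s := by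
      conv_lhs => rw [← Finsupp.sum_single x]
      rw [hFsum x (fun j c => Finsupp.single j c) s]
      refine Finsupp.sum_congr fun j _ => ?_
      rw [← hFsmul, Finsupp.smul_single', mul_one]
    rw [h1]
    have h2 : (x.sum fun j c => c • F (Finsupp.single j 1) s)
        = x.sum fun j c =>
            -∑ u ∈ Finset.range (s + 1), c • G (kUExt (Finsupp.single j 1) u) (s - u) := by
      refine Finsupp.sum_congr fun j hj => ?_
      rw [hrec j (hx j hj) s, smul_neg, Finset.smul_sum]
    rw [h2, Finsupp.sum, Finset.sum_neg_distrib, Finset.sum_comm]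
    congr 1
    refine Finset.sum_congr rfl fun u _ => ?_
    have h3 : (∑ j ∈ x.support, (x j) • G (kUExt (Finsupp.single j 1) u) (s - u))
        = x.sum fun j c => G (c • kU j u) (s - u) := by
      refine Finset.sum_congr rfl fun j _ => ?_
      rw [hsingle]
      exact (hGsmul (x j) (kU j u) (s - u)).symm
    rw [h3, ← hGsum x (fun j c => c • kU j u) (s - u)]
    rfl
  intro k hk t
  simp only [hsingle]
  have hstep : ∀ u, F (kU k u) (t - u)
      = -∑ u' ∈ Finset.range (t - u + 1),
          ((u + u').choose u : ℤ) • G (kU k (u + u')) (t - u - u') := by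
    intro u
    rw [hrecE (kU k u) (kU_support_length u) (t - u)]
    congr 1
    refine Finset.sum_congr rfl fun u' _ => ?_
    rw [kUExt_kU, hGsmul]
  calc G (Finsupp.single k 1) t
      = ∑ m ∈ Finset.range (t + 1),
          (if m = 0 then (1 : ℤ) else 0) • G (kU k m) (t - m) := by
        rw [Finset.sum_eq_single_of_mem 0 (Finset.mem_range.mpr (by omega))
              (fun b _ hb => by rw [if_neg hb, zero_smul])]
        rw [if_pos rfl, one_smul, Nat.sub_zero, kU_zero hk]
    _ = ∑ m ∈ Finset.range (t + 1), ∑ j ∈ Finset.range (m + 1),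
          ((-1 : ℤ) ^ j * (m.choose j : ℤ)) • G (kU k m) (t - m) := by
        refine Finset.sum_congr rfl fun m _ => ?_
        rw [← Finset.sum_smul, Int.alternating_sum_range_choose]
    _ = ∑ m ∈ Finset.range (t + 1), ∑ j ∈ Finset.range (m + 1),
          (fun u v => ((-1 : ℤ) ^ u * ((u + v).choose u : ℤ)) •
            G (kU k (u + v)) (t - (u + v))) j (m - j) := by
        refine Finset.sum_congr rfl fun m _ => Finset.sum_congr rfl fun j hj => ?_
        have h : j + (m - j) = m := by
          have := Finset.mem_range.mp hj; omega
        simp only [h]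
    _ = ∑ m ∈ Finset.range (t + 1), ∑ j ∈ Finset.range (t + 1 - m),
          (fun u v => ((-1 : ℤ) ^ u * ((u + v).choose u : ℤ)) •
            G (kU k (u + v)) (t - (u + v))) m j :=
        Finset.sum_range_diag_flip (t + 1)
          (fun u v => ((-1 : ℤ) ^ u * ((u + v).choose u : ℤ)) •
            G (kU k (u + v)) (t - (u + v)))
    _ = -∑ u ∈ Finset.range (t + 1), (-1 : ℤ) ^ u • F (kU k u) (t - u) := by
        rw [← Finset.sum_neg_distrib]
        refine Finset.sum_congr rfl fun u hu => ?_
        rw [hstep u, smul_neg, neg_neg, Finset.smul_sum]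
        have h : t + 1 - u = t - u + 1 := by
          have := Finset.mem_range.mp hu; omega
        rw [h]
        refine Finset.sum_congr rfl fun j hj => ?_
        simp only [mul_smul, Nat.sub_sub]
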